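/- arXiv:2406.08526 — 3 statements merged into one kernel-verified Lean document; each statement's English description precedes it below -/
import Mathlib

section
/- Let d_k > 0, s_k > 0, δ > 0, 0 < θ < 1 and 0 < λ_k < λ be real numbers; define U_k^L(r) = r·d_k·(1 − λ_k/λ) − d_k·s_k, U_k^A(r) = r·d_k·(1 − θ·λ_k/λ) − d_k·s_k − d_k·δ·λ_k, ζ1(k) = λ·s_k/(λ − λ_k), and ζ3 = λ·δ/(1 − θ). Suppose client k is type-1, i.e., ζ1(k) ≤ ζ3. Then for every real r: (a) if r < ζ1(k) then U_k^L(r) < 0 and U_k^A(r) < 0, so not participating (utility 0) is strictly optimal; (b) if ζ1(k) ≤ r < ζ3 then U_k^L(r) ≥ 0 and U_k^A(r) < U_k^L(r), so participating with the local dataset is optimal; (c) if r ≥ ζ3 then U_k^A(r) ≥ U_k^L(r) and U_k^A(r) ≥ 0, so participating with the AIGC-enhanced dataset is optimal. -/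
/-- rational behavior of a type-1 client (`ζ1(k) ≤ ζ3`). -/
theorem type1_client_behavior
    (dk sk lamk lam θ δ : ℝ) (hd : 0 < dk) (hs : 0 < sk) (hδ : 0 < δ)
    (hθ0 : 0 < θ) (hθ1 : θ < 1) (hlk : 0 < lamk) (hlt : lamk < lam)
    (htype1 : lam * sk / (lam - lamk) ≤ lam * δ / (1 - θ)) :
    ∀ r : ℝ,
      (r < lam * sk / (lam - lamk) →
          r * dk * (1 - lamk / lam) - dk * sk < 0 ∧
          r * dk * (1 - θ * lamk / lam) - dk * sk - dk * δ * lamk < 0) ∧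
      (lam * sk / (lam - lamk) ≤ r → r < lam * δ / (1 - θ) →
          0 ≤ r * dk * (1 - lamk / lam) - dk * sk ∧
          r * dk * (1 - θ * lamk / lam) - dk * sk - dk * δ * lamk <
            r * dk * (1 - lamk / lam) - dk * sk) ∧
      (lam * δ / (1 - θ) ≤ r →
          r * dk * (1 - lamk / lam) - dk * sk ≤
            r * dk * (1 - θ * lamk / lam) - dk * sk - dk * δ * lamk ∧
          0 ≤ r * dk * (1 - θ * lamk / lam) - dk * sk - dk * δ * lamk) := by
  have hl : 0 < lam := hlk.trans hlt
  have hml : 0 < lam - lamk := by linarith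
  have h1θ : 0 < 1 - θ := by linarith
  have ht : lam * sk * (1 - θ) ≤ lam * δ * (lam - lamk) :=
    (div_le_div_iff₀ hml h1θ).mp htype1
  intro r
  have eL : r * dk * (1 - lamk / lam) - dk * sk
      = dk * (r * (lam - lamk) - lam * sk) / lam := by
    field_simp
  have eA : r * dk * (1 - θ * lamk / lam) - dk * sk - dk * δ * lamk
      = dk * (r * (lam - lamk) - lam * sk + lamk * (r * (1 - θ) - lam * δ)) / lam := by
    field_simp; ring
  have hdlk : 0 < dk * lamk := mul_pos hd hlk
  rw [eL, eA]
  refine ⟨fun h => ?_, fun h1 h2 => ?_, fun h => ?_⟩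
  · rw [lt_div_iff₀ hml] at h
    have hh : r * (lam - lamk) - lam * sk < 0 := by linarith
    have hr3 : r * (1 - θ) < lam * δ := by
      nlinarith [mul_lt_mul_of_pos_right h h1θ]
    have hA : r * (lam - lamk) - lam * sk + lamk * (r * (1 - θ) - lam * δ) < 0 := by
      nlinarith [mul_lt_mul_of_pos_left hr3 hlk]
    exact ⟨div_neg_of_neg_of_pos (by nlinarith) hl, div_neg_of_neg_of_pos (by nlinarith) hl⟩
  · rw [div_le_iff₀ hml] at h1
    rw [lt_div_iff₀ h1θ] at h2
    have hL : 0 ≤ r * (lam - lamk) - lam * sk := by linarith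
    refine ⟨div_nonneg (by nlinarith) hl.le, ?_⟩
    rw [div_lt_div_iff₀ hl hl]
    nlinarith [mul_lt_mul_of_pos_left h2 hdlk]
  · rw [div_le_iff₀ h1θ] at h
    have hr1 : lam * sk ≤ r * (lam - lamk) := by
      nlinarith [mul_le_mul_of_nonneg_right h hml.le]
    have hkey : 0 ≤ lamk * (r * (1 - θ) - lam * δ) := by nlinarith
    constructor
    · exact (div_le_div_iff_of_pos_right hl).mpr (mul_le_mul_of_nonneg_left (by linarith) hd.le)
    · refine div_nonneg ?_ hl.le
      exact mul_nonneg hd.le (by linarith)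
end

section
/- Let d_k > 0, s_k > 0, δ > 0, 0 < θ < 1 and 0 < λ_k < λ be real numbers; define U_k^L(r) = r·d_k·(1 − λ_k/λ) − d_k·s_k, U_k^A(r) = r·d_k·(1 − θ·λ_k/λ) − d_k·s_k − d_k·δ·λ_k, ζ1(k) = λ·s_k/(λ − λ_k), ζ2(k) = (λ·s_k + λ·δ·λ_k)/(λ − θ·λ_k), and ζ3 = λ·δ/(1 − θ). Suppose client k is type-2, i.e., ζ3 < ζ1(k). Then for every real r: (a) if r < ζ2(k) then U_k^L(r) < 0 and U_k^A(r) < 0, so not participating (utility 0) is strictly optimal; (b) if r ≥ ζ2(k) then U_k^A(r) ≥ 0 and U_k^A(r) ≥ U_k^L(r), so participating with the AIGC-enhanced dataset is optimal. -/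
/-- rational behavior of a type-2 client (`ζ3 < ζ1(k)`). -/
theorem type2_client_behavior
    (dk sk lamk lam θ δ : ℝ) (hd : 0 < dk) (hs : 0 < sk) (hδ : 0 < δ)
    (hθ0 : 0 < θ) (hθ1 : θ < 1) (hlk : 0 < lamk) (hlt : lamk < lam)
    (htype2 : lam * δ / (1 - θ) < lam * sk / (lam - lamk)) :
    ∀ r : ℝ,
      (r < (lam * sk + lam * δ * lamk) / (lam - θ * lamk) →
          r * dk * (1 - lamk / lam) - dk * sk < 0 ∧
          r * dk * (1 - θ * lamk / lam) - dk * sk - dk * δ * lamk < 0) ∧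
      ((lam * sk + lam * δ * lamk) / (lam - θ * lamk) ≤ r →
          0 ≤ r * dk * (1 - θ * lamk / lam) - dk * sk - dk * δ * lamk ∧
          r * dk * (1 - lamk / lam) - dk * sk ≤
            r * dk * (1 - θ * lamk / lam) - dk * sk - dk * δ * lamk) := by
  have hlam : (0:ℝ) < lam := hlk.trans hlt
  have h1 : (0:ℝ) < lam - lamk := by linarith
  have h2 : (0:ℝ) < 1 - θ := by linarith
  have h3 : (0:ℝ) < lam - θ * lamk := by nlinarith
  have hkey : δ * (lam - lamk) < sk * (1 - θ) := by
    have := (div_lt_div_iff₀ h2 h1).mp htype2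
    nlinarith
  have eL : ∀ r : ℝ, r * dk * (1 - lamk / lam) - dk * sk
      = dk * (r * (lam - lamk) - lam * sk) / lam := by
    intro r; field_simp
  have eA : ∀ r : ℝ, r * dk * (1 - θ * lamk / lam) - dk * sk - dk * δ * lamk
      = dk * (r * (lam - θ * lamk) - (lam * sk + lam * δ * lamk)) / lam := by
    intro r; field_simp; ring
  intro r
  constructor
  · intro hr
    have hra : r * (lam - θ * lamk) < lam * sk + lam * δ * lamk :=
      (lt_div_iff₀ h3).mp hr
    have hz21 : (lam * sk + lam * δ * lamk) / (lam - θ * lamk)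
        ≤ lam * sk / (lam - lamk) := by
      rw [div_le_div_iff₀ h3 h1]
      nlinarith [mul_pos hlam hlk]
    have hrb : r * (lam - lamk) < lam * sk :=
      (lt_div_iff₀ h1).mp (hr.trans_le hz21)
    constructor
    · rw [eL r]
      exact div_neg_of_neg_of_pos (by nlinarith) hlam
    · rw [eA r]
      exact div_neg_of_neg_of_pos (by nlinarith) hlam
  · intro hr
    have hra : lam * sk + lam * δ * lamk ≤ r * (lam - θ * lamk) :=
      (div_le_iff₀ h3).mp hr
    have hr3 : lam * δ ≤ r * (1 - θ) := by
      nlinarith [mul_le_mul_of_nonneg_left hra h2.le,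
        mul_lt_mul_of_pos_left hkey hlam, h3]
    constructor
    · rw [eA r]
      exact div_nonneg (by nlinarith) hlam.le
    · rw [eL r, eA r, div_le_div_iff₀ hlam hlam]
      nlinarith [mul_pos hd hlk, mul_pos hlam (mul_pos hd hlk)]
end

section
/- Let K be a finite set of clients, each client k having attributes d_k > 0, s_k > 0, 0 < λ_k < λ, with constants 0 < θ < 1, δ > 0, and define ζ1(k) = λ·s_k/(λ − λ_k), ζ2(k) = (λ·s_k + λ·δ·λ_k)/(λ − θ·λ_k), ζ3 = λ·δ/(1 − θ), and the indicator set Z = ∪_{k∈K} {ζ1(k), ζ2(k), ζ3}. For r > 0, define the participating sets N_r^L = {k ∈ K : ζ1(k) ≤ ζ3 and ζ1(k) ≤ r < ζ3} and N_r^A = {k ∈ K : (ζ1(k) ≤ ζ3 and r ≥ ζ3) or (ζ3 < ζ1(k) and r ≥ ζ2(k))}, with N_r = N_r^L ∪ N_r^A, and when N_r ≠ ∅ set Λ(N_r) = Σ_{k∈N_r^L} (d_k/d(N_r))·(ψ/√(d_k/h) + λ_k) + Σ_{k∈N_r^A} (d_k/d(N_r))·(ψ/√(d_k/h) + θλ_k)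 where d(N_r) = Σ_{k∈N_r} d_k, and set R̃(N_r) = Σ_{k∈N_r^L} d_k·(1 − λ_k/λ) + Σ_{k∈N_r^A} d_k·(1 − θλ_k/λ). Let the server's cost be C(T, r) = γ1·φ^{hT}·Θ + (1 − φ^{hT})·γ1·κ1·Λ(N_r) + γ2·T·r·R̃(N_r), with γ1 > 0, γ2 > 0, 0 < φ < 1, h, T positive integers, κ1 > 0, ψ ≥ 0. Then for every r > 0 with r ∉ Z and N_r ≠ ∅, there exists r' ∈ Z with r' < r such that N_{r'}^L = N_r^L, N_{r'}^A = N_r^A, and C(T, r') < C(T, r). Consequently, for any fixed T, any r minimizing C(T, ·) over r with nonempty participation must belong to Z. -/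
open Finset

noncomputable section IMFL

variable {ι : Type*} [Fintype ι] [DecidableEq ι]

/-- Indicator ζ1(k) = λ·s_k/(λ − λ_k). -/
def zeta1 (lam : ℝ) (s lk : ι → ℝ) (k : ι) : ℝ := lam * s k / (lam - lk k)

/-- Indicator ζ2(k) = (λ·s_k + λ·δ·λ_k)/(λ − θ·λ_k). -/
def zeta2 (lam θ δ : ℝ) (s lk : ι → ℝ) (k : ι) : ℝ :=
  (lam * s k + lam * δ * lk k) / (lam - θ * lk k)

/-- Indicator ζ3 = λ·δ/(1 − θ). -/
def zeta3 (lam θ δ : ℝ) : ℝ := lam * δ / (1 - θ)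

/-- The set of all clients' indicators. -/
def indicatorSet (lam θ δ : ℝ) (s lk : ι → ℝ) : Set ℝ :=
  ⋃ k : ι, {zeta1 lam s lk k, zeta2 lam θ δ s lk k, zeta3 lam θ δ}

/-- Participating clients using their local datasets under reward benchmark `r`. -/
def NL (lam θ δ : ℝ) (s lk : ι → ℝ) (r : ℝ) : Finset ι :=
  univ.filter fun k =>
    zeta1 lam s lk k ≤ zeta3 lam θ δ ∧ zeta1 lam s lk k ≤ r ∧ r < zeta3 lam θ δ

/-- Participating clients using their AIGC-enhanced datasets under reward benchmark `r`. -/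
def NA (lam θ δ : ℝ) (s lk : ι → ℝ) (r : ℝ) : Finset ι :=
  univ.filter fun k =>
    (zeta1 lam s lk k ≤ zeta3 lam θ δ ∧ zeta3 lam θ δ ≤ r) ∨
    (zeta3 lam θ δ < zeta1 lam s lk k ∧ zeta2 lam θ δ s lk k ≤ r)

/-- All participating clients under reward benchmark `r`. -/
def NP (lam θ δ : ℝ) (s lk : ι → ℝ) (r : ℝ) : Finset ι :=
  NL lam θ δ s lk r ∪ NA lam θ δ s lk r

/-- Training gradient error Λ(N_r) of the participating clients (with B_k = d_k/h). -/
def LamErr (lam θ δ ψ : ℝ) (h : ℕ) (d s lk : ι → ℝ) (r : ℝ) : ℝ :=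
  (∑ k ∈ NL lam θ δ s lk r,
      (d k / ∑ j ∈ NP lam θ δ s lk r, d j) * (ψ / Real.sqrt (d k / h) + lk k)) +
  ∑ k ∈ NA lam θ δ s lk r,
      (d k / ∑ j ∈ NP lam θ δ s lk r, d j) * (ψ / Real.sqrt (d k / h) + θ * lk k)

/-- Quality-discounted total data reward R̃(N_r) per unit reward per iteration. -/
def Rtil (lam θ δ : ℝ) (d s lk : ι → ℝ) (r : ℝ) : ℝ :=
  (∑ k ∈ NL lam θ δ s lk r, d k * (1 - lk k / lam)) +
  ∑ k ∈ NA lam θ δ s lk r, d k * (1 - θ * lk k / lam)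

/-- Server's cost `C(T, r)`. -/
def serverCost (lam θ δ ψ γ1 γ2 φ Θ κ1 : ℝ) (h : ℕ) (d s lk : ι → ℝ) (T : ℕ) (r : ℝ) : ℝ :=
  γ1 * φ ^ (h * T) * Θ + (1 - φ ^ (h * T)) * γ1 * κ1 * LamErr lam θ δ ψ h d s lk r +
    γ2 * T * r * Rtil lam θ δ d s lk r

/-- Proposition 1: for any fixed `T`, any reward benchmark `r ∉ Z` with
nonempty participation is strictly improved by some indicator `r' ∈ Z` below it that keeps
the participating sets unchanged; consequently any cost-minimizing `r` with nonempty
participation belongs to the indicator set `Z`. -/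
theorem optimal_reward_in_indicator_set
    (d s lk : ι → ℝ) (lam θ δ γ1 γ2 φ Θ κ1 ψ : ℝ) (h T : ℕ)
    (hd : ∀ k, 0 < d k) (hs : ∀ k, 0 < s k) (hlk : ∀ k, 0 < lk k) (hlam : ∀ k, lk k < lam)
    (hθ0 : 0 < θ) (hθ1 : θ < 1) (hδ : 0 < δ) (hγ1 : 0 < γ1) (hγ2 : 0 < γ2)
    (hφ0 : 0 < φ) (hφ1 : φ < 1) (hh : 0 < h) (hT : 0 < T) (hκ : 0 < κ1) (hψ : 0 ≤ ψ) :
    (∀ r : ℝ, 0 < r → r ∉ indicatorSet lam θ δ s lk → (NP lam θ δ s lk r).Nonempty →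
        ∃ r' ∈ indicatorSet lam θ δ s lk, r' < r ∧
          NL lam θ δ s lk r' = NL lam θ δ s lk r ∧
          NA lam θ δ s lk r' = NA lam θ δ s lk r ∧
          serverCost lam θ δ ψ γ1 γ2 φ Θ κ1 h d s lk T r' <
            serverCost lam θ δ ψ γ1 γ2 φ Θ κ1 h d s lk T r) ∧
      ∀ r : ℝ, 0 < r → (NP lam θ δ s lk r).Nonempty →
        (∀ r'' : ℝ, 0 < r'' → (NP lam θ δ s lk r'').Nonempty →
          serverCost lam θ δ ψ γ1 γ2 φ Θ κ1 h d s lk T r ≤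
            serverCost lam θ δ ψ γ1 γ2 φ Θ κ1 h d s lk T r'') →
        r ∈ indicatorSet lam θ δ s lk := by
  classical
  have main : ∀ r : ℝ, 0 < r → r ∉ indicatorSet lam θ δ s lk → (NP lam θ δ s lk r).Nonempty →
      ∃ r' ∈ indicatorSet lam θ δ s lk, r' < r ∧
        NL lam θ δ s lk r' = NL lam θ δ s lk r ∧
        NA lam θ δ s lk r' = NA lam θ δ s lk r ∧
        serverCost lam θ δ ψ γ1 γ2 φ Θ κ1 h d s lk T r' <
          serverCost lam θ δ ψ γ1 γ2 φ Θ κ1 h d s lk T r := by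
    intro r hr hrZ hne
    obtain ⟨k0, hk0⟩ := hne
    have hlam0 : 0 < lam := (hlk k0).trans (hlam k0)
    set Fz : Finset ℝ := Finset.univ.biUnion
      (fun k : ι => {zeta1 lam s lk k, zeta2 lam θ δ s lk k, zeta3 lam θ δ}) with hFz
    have hmemZ : ∀ z, z ∈ Fz ↔ z ∈ indicatorSet lam θ δ s lk := by
      intro z
      simp [hFz, indicatorSet, Set.mem_iUnion]
    have hz1mem : ∀ k, zeta1 lam s lk k ∈ Fz := by
      intro k; exact Finset.mem_biUnion.mpr ⟨k, Finset.mem_univ _, by simp⟩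
    have hz2mem : ∀ k, zeta2 lam θ δ s lk k ∈ Fz := by
      intro k; exact Finset.mem_biUnion.mpr ⟨k, Finset.mem_univ _, by simp⟩
    have hz3mem : zeta3 lam θ δ ∈ Fz :=
      Finset.mem_biUnion.mpr ⟨k0, Finset.mem_univ _, by simp⟩
    have hner : ∀ z ∈ Fz, z ≠ r := by
      intro z hz hzr
      exact hrZ (hzr ▸ (hmemZ z).mp hz)
    set S : Finset ℝ := Fz.filter (· < r) with hS
    have hSne : S.Nonempty := by
      simp only [NP, NL, NA, Finset.mem_union, Finset.mem_filter, Finset.mem_univ,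
        true_and] at hk0
      rcases hk0 with ⟨_, h1, _⟩ | (⟨_, h3⟩ | ⟨_, h2⟩)
      · exact ⟨zeta1 lam s lk k0, Finset.mem_filter.mpr ⟨hz1mem k0,
          lt_of_le_of_ne h1 (hner _ (hz1mem k0))⟩⟩
      · exact ⟨zeta3 lam θ δ, Finset.mem_filter.mpr ⟨hz3mem,
          lt_of_le_of_ne h3 (hner _ hz3mem)⟩⟩
      · exact ⟨zeta2 lam θ δ s lk k0, Finset.mem_filter.mpr ⟨hz2mem k0,
          lt_of_le_of_ne h2 (hner _ (hz2mem k0))⟩⟩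
    set r' : ℝ := S.max' hSne with hr'
    have hr'S : r' ∈ S := S.max'_mem hSne
    have hr'Fz : r' ∈ Fz := (Finset.mem_filter.mp hr'S).1
    have hr'lt : r' < r := (Finset.mem_filter.mp hr'S).2
    have hle : ∀ z ∈ Fz, (z ≤ r ↔ z ≤ r') := by
      intro z hz
      constructor
      · intro hzr
        exact S.le_max' z (Finset.mem_filter.mpr ⟨hz, lt_of_le_of_ne hzr (hner z hz)⟩)
      · intro hzr'
        exact hzr'.trans hr'lt.le
    have hltiff : ∀ z ∈ Fz, (r < z ↔ r' < z) := by
      intro z hz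
      rw [← not_le, ← not_le, not_iff_not]
      exact hle z hz
    have hNLeq : NL lam θ δ s lk r' = NL lam θ δ s lk r := by
      ext k
      simp only [NL, Finset.mem_filter, Finset.mem_univ, true_and]
      rw [hle _ (hz1mem k), hltiff _ hz3mem]
    have hNAeq : NA lam θ δ s lk r' = NA lam θ δ s lk r := by
      ext k
      simp only [NA, Finset.mem_filter, Finset.mem_univ, true_and]
      rw [hle _ hz3mem, hle _ (hz2mem k)]
    have hNPeq : NP lam θ δ s lk r' = NP lam θ δ s lk r := by
      simp only [NP, hNLeq, hNAeq]
    have hLam : LamErr lam θ δ ψ h d s lk r' = LamErr lam θ δ ψ h d s lk r := by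
      unfold LamErr
      rw [hNLeq, hNAeq, hNPeq]
    have hRtil : Rtil lam θ δ d s lk r' = Rtil lam θ δ d s lk r := by
      unfold Rtil
      rw [hNLeq, hNAeq]
    have hposL : ∀ k : ι, 0 < d k * (1 - lk k / lam) := by
      intro k
      have : lk k / lam < 1 := (div_lt_one hlam0).mpr (hlam k)
      exact mul_pos (hd k) (by linarith)
    have hposA : ∀ k : ι, 0 < d k * (1 - θ * lk k / lam) := by
      intro k
      have h1 : θ * lk k < lk k := by nlinarith [hlk k]
      have : θ * lk k / lam < 1 := (div_lt_one hlam0).mpr (h1.trans (hlam k))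
      exact mul_pos (hd k) (by linarith)
    have hRpos : 0 < Rtil lam θ δ d s lk r := by
      unfold Rtil
      have hLnn : 0 ≤ ∑ k ∈ NL lam θ δ s lk r, d k * (1 - lk k / lam) :=
        Finset.sum_nonneg fun k _ => (hposL k).le
      have hAnn : 0 ≤ ∑ k ∈ NA lam θ δ s lk r, d k * (1 - θ * lk k / lam) :=
        Finset.sum_nonneg fun k _ => (hposA k).le
      rcases Finset.mem_union.mp hk0 with hL | hA
      · have : 0 < ∑ k ∈ NL lam θ δ s lk r, d k * (1 - lk k / lam) :=
          Finset.sum_pos' (fun k _ => (hposL k).le) ⟨k0, hL, hposL k0⟩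
        linarith
      · have : 0 < ∑ k ∈ NA lam θ δ s lk r, d k * (1 - θ * lk k / lam) :=
          Finset.sum_pos' (fun k _ => (hposA k).le) ⟨k0, hA, hposA k0⟩
        linarith
    refine ⟨r', (hmemZ r').mp hr'Fz, hr'lt, hNLeq, hNAeq, ?_⟩
    have hT' : (0 : ℝ) < T := by exact_mod_cast hT
    have hlast : γ2 * T * r' * Rtil lam θ δ d s lk r < γ2 * T * r * Rtil lam θ δ d s lk r := by
      have := mul_lt_mul_of_pos_left hr'lt (mul_pos hγ2 hT')
      exact mul_lt_mul_of_pos_right this hRpos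
    unfold serverCost
    rw [hLam, hRtil]
    linarith
  refine ⟨main, ?_⟩
  intro r hr hne hmin
  by_contra hrZ
  obtain ⟨r', hr'Z, hr'lt, hNLeq, hNAeq, hlt⟩ := main r hr hrZ hne
  have hr'pos : 0 < r' := by
    simp only [indicatorSet, Set.mem_iUnion, Set.mem_insert_iff, Set.mem_singleton_iff] at hr'Z
    obtain ⟨k, hk⟩ := hr'Z
    have hlam0 : 0 < lam := (hlk k).trans (hlam k)
    rcases hk with h1 | h2 | h3
    · rw [h1, zeta1]
      exact div_pos (mul_pos hlam0 (hs k)) (sub_pos.mpr (hlam k))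
    · rw [h2, zeta2]
      have hθlk : θ * lk k < lam := by nlinarith [hlk k, hlam k]
      have hnum : 0 < lam * s k + lam * δ * lk k :=
        add_pos (mul_pos hlam0 (hs k)) (mul_pos (mul_pos hlam0 hδ) (hlk k))
      exact div_pos hnum (sub_pos.mpr hθlk)
    · rw [h3, zeta3]
      exact div_pos (mul_pos hlam0 hδ) (by linarith)
  have hNPeq : NP lam θ δ s lk r' = NP lam θ δ s lk r := by
    simp only [NP, hNLeq, hNAeq]
  exact absurd (hmin r' hr'pos (hNPeq ▸ hne)) (not_le.mpr hlt)


end IMFL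
end
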